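/- For every open disc B ⊆ ℝ² of radius R > 0 there exists a sequence of pairwise disjoint open discs contained in B whose union U is dense in B and satisfies |U| < |B|/2, where |·| denotes Lebesgue measure on ℝ²; consequently B \ U is a Borel set of positive Lebesgue measure. -/

import Mathlib

open Metric MeasureTheory Set

noncomputable section

/-- The Euclidean plane. -/
abbrev E2 := EuclideanSpace ℝ (Fin 2)

namespace Stmt10Aux

lemma vol_closedBall (x : E2) {r : ℝ} (hr : 0 ≤ r) :
    volume (closedBall x r) = ENNReal.ofReal (r ^ 2) * volume (ball (0 : E2) 1) := by
  rw [MeasureTheory.Measure.addHaar_closedBall volume x hr]; norm_num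

lemma vol_ball (x : E2) {r : ℝ} (hr : 0 ≤ r) :
    volume (ball x r) = ENNReal.ofReal (r ^ 2) * volume (ball (0 : E2) 1) := by
  rw [MeasureTheory.Measure.addHaar_ball volume x hr]; norm_num

lemma sq_bound {R : ℝ} (hR : 0 < R) (k : ℕ) {r : ℝ} (hr0 : 0 ≤ r)
    (hrb : r ≤ R / 4 * (1 / 2) ^ k) : r ^ 2 ≤ R ^ 2 / 16 * (1 / 2) ^ k := by
  have hp : (0:ℝ) ≤ (1/2:ℝ)^k := by positivity
  have hp1 : ((1/2:ℝ))^k ≤ 1 := pow_le_one₀ (by norm_num) (by norm_num)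
  have h1 : r ^ 2 ≤ (R / 4 * (1 / 2) ^ k) ^ 2 := pow_le_pow_left₀ hr0 hrb 2
  calc r ^ 2 ≤ (R / 4 * (1 / 2) ^ k) ^ 2 := h1
    _ = R ^ 2 / 16 * ((1/2:ℝ)^k * (1/2:ℝ)^k) := by ring
    _ ≤ R ^ 2 / 16 * ((1/2:ℝ)^k * 1) := by gcongr
    _ = R ^ 2 / 16 * (1/2:ℝ)^k := by ring

lemma tsum_geom {R : ℝ} :
    ∑' k : ℕ, ENNReal.ofReal (R ^ 2 / 16 * (1 / 2) ^ k) = ENNReal.ofReal (R ^ 2 / 8) := by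
  rw [← ENNReal.ofReal_tsum_of_nonneg (fun k => by positivity)
    (summable_geometric_two.mul_left _)]
  congr 1
  rw [tsum_mul_left, tsum_geometric_two]; ring

lemma finite_union_bound (R : ℝ) (hR : 0 < R) (n : ℕ) (x : ℕ → E2) (r : ℕ → ℝ)
    (hr0 : ∀ k < n, 0 ≤ r k) (hrb : ∀ k < n, r k ≤ R / 4 * (1 / 2) ^ k) :
    volume (⋃ k ∈ Finset.range n, closedBall (x k) (r k)) ≤
      ENNReal.ofReal (R ^ 2 / 8) * volume (ball (0 : E2) 1) := by
  calc volume (⋃ k ∈ Finset.range n, closedBall (x k) (r k))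
      ≤ ∑ k ∈ Finset.range n, volume (closedBall (x k) (r k)) :=
        measure_biUnion_finset_le _ _
    _ ≤ ∑ k ∈ Finset.range n, ENNReal.ofReal (R ^ 2 / 16 * (1 / 2) ^ k) *
          volume (ball (0 : E2) 1) := by
        apply Finset.sum_le_sum
        intro k hk
        rw [Finset.mem_range] at hk
        rw [vol_closedBall _ (hr0 k hk)]
        exact mul_le_mul_of_nonneg_right (ENNReal.ofReal_le_ofReal
          (sq_bound hR k (hr0 k hk) (hrb k hk))) zero_le
    _ = (∑ k ∈ Finset.range n, ENNReal.ofReal (R ^ 2 / 16 * (1 / 2) ^ k)) *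
          volume (ball (0 : E2) 1) := by rw [Finset.sum_mul]
    _ ≤ (∑' k : ℕ, ENNReal.ofReal (R ^ 2 / 16 * (1 / 2) ^ k)) *
          volume (ball (0 : E2) 1) := mul_le_mul_of_nonneg_right (ENNReal.sum_le_tsum _) zero_le
    _ = ENNReal.ofReal (R ^ 2 / 8) * volume (ball (0 : E2) 1) := by rw [tsum_geom]

lemma tsum_union_bound (R : ℝ) (hR : 0 < R) (x : ℕ → E2) (r : ℕ → ℝ)
    (hr0 : ∀ k, 0 ≤ r k) (hrb : ∀ k, r k ≤ R / 4 * (1 / 2) ^ k) :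
    volume (⋃ k, ball (x k) (r k)) ≤
      ENNReal.ofReal (R ^ 2 / 8) * volume (ball (0 : E2) 1) := by
  calc volume (⋃ k, ball (x k) (r k)) ≤ ∑' k, volume (ball (x k) (r k)) :=
        measure_iUnion_le _
    _ ≤ ∑' k : ℕ, ENNReal.ofReal (R ^ 2 / 16 * (1 / 2) ^ k) * volume (ball (0 : E2) 1) := by
        apply ENNReal.tsum_le_tsum
        intro k
        rw [vol_ball _ (hr0 k)]
        exact mul_le_mul_of_nonneg_right (ENNReal.ofReal_le_ofReal
          (sq_bound hR k (hr0 k) (hrb k))) zero_le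
    _ = ENNReal.ofReal (R ^ 2 / 8) * volume (ball (0 : E2) 1) := by
        rw [ENNReal.tsum_mul_right, tsum_geom]

lemma extend_exists (c : E2) (R : ℝ) (hR : 0 < R) (n : ℕ) (x : ℕ → E2) (r : ℕ → ℝ)
    (hr0 : ∀ k < n, 0 < r k) (hrb : ∀ k < n, r k ≤ R / 4 * (1 / 2) ^ k)
    (p : E2) (δ : ℝ) :
    ∃ q : E2, ∃ ρ : ℝ, 0 < ρ ∧ ρ ≤ R / 4 * (1 / 2) ^ n ∧ closedBall q ρ ⊆ ball c R ∧
      (∀ k < n, Disjoint (closedBall q ρ) (closedBall (x k) (r k))) ∧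
      (q ∈ ball p δ ∨ ball p δ ∩ ball c R ⊆ ⋃ k ∈ Finset.range n, closedBall (x k) (r k)) := by
  set K := ⋃ k ∈ Finset.range n, closedBall (x k) (r k) with hK
  have hKclosed : IsClosed K := by
    apply Set.Finite.isClosed_biUnion (Finset.finite_toSet _)
    intro k _; exact isClosed_closedBall
  have hv0 : volume (ball (0:E2) 1) ≠ 0 := (measure_ball_pos _ _ one_pos).ne'
  have hvt : volume (ball (0:E2) 1) ≠ ⊤ := measure_ball_lt_top.ne
  have hKvol : volume K < volume (ball c R) := by
    calc volume K ≤ ENNReal.ofReal (R ^ 2 / 8) * volume (ball (0 : E2) 1) :=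
          finite_union_bound R hR n x r (fun k hk => (hr0 k hk).le) hrb
      _ < ENNReal.ofReal (R ^ 2) * volume (ball (0 : E2) 1) := by
          rw [ENNReal.mul_lt_mul_iff_left hv0 hvt]
          rw [ENNReal.ofReal_lt_ofReal_iff (by positivity)]
          nlinarith [sq_nonneg R, mul_pos hR hR]
      _ = volume (ball c R) := (vol_ball c hR.le).symm
  have key : ∀ S : Set E2, IsOpen S → S.Nonempty → S ⊆ ball c R \ K →
      ∃ q : E2, ∃ ρ : ℝ, 0 < ρ ∧ ρ ≤ R / 4 * (1 / 2) ^ n ∧ closedBall q ρ ⊆ ball c R ∧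
        (∀ k < n, Disjoint (closedBall q ρ) (closedBall (x k) (r k))) ∧ q ∈ S := by
    intro S hSopen ⟨q, hq⟩ hSsub
    obtain ⟨ε, hε, hball⟩ := Metric.isOpen_iff.1 hSopen q hq
    refine ⟨q, min (ε / 2) (R / 4 * (1 / 2) ^ n), ?_, min_le_right _ _, ?_, ?_, hq⟩
    · have : (0:ℝ) < R / 4 * (1/2)^n := by positivity
      exact lt_min (by linarith) this
    · intro a ha
      have : a ∈ S := hball (lt_of_le_of_lt (mem_closedBall.1 ha)
        (lt_of_le_of_lt (min_le_left _ _) (by linarith)))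
      exact (hSsub this).1
    · intro k hk
      rw [Set.disjoint_left]
      intro a ha ha'
      have haS : a ∈ S := hball (lt_of_le_of_lt (mem_closedBall.1 ha)
        (lt_of_le_of_lt (min_le_left _ _) (by linarith)))
      exact (hSsub haS).2 (Set.mem_biUnion (Finset.mem_coe.2 (Finset.mem_range.2 hk)) ha')
  by_cases h : ((ball p δ ∩ ball c R) \ K).Nonempty
  · obtain ⟨q, ρ, h1, h2, h3, h4, h5⟩ := key _ (((isOpen_ball.inter isOpen_ball).sdiff hKclosed))
      h (fun a ha => ⟨ha.1.2, ha.2⟩)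
    exact ⟨q, ρ, h1, h2, h3, h4, Or.inl h5.1.1⟩
  · have hW : (ball c R \ K).Nonempty := by
      by_contra hW
      rw [Set.not_nonempty_iff_eq_empty, Set.diff_eq_empty] at hW
      exact absurd (measure_mono hW) (not_le.2 hKvol)
    obtain ⟨q, ρ, h1, h2, h3, h4, h5⟩ := key _ (isOpen_ball.sdiff hKclosed) hW subset_rfl
    refine ⟨q, ρ, h1, h2, h3, h4, Or.inr ?_⟩
    intro a ha
    by_contra haK
    exact h ⟨a, ha, haK⟩

def Good (c : E2) (R : ℝ) (d : ℕ → E2) (n : ℕ) (f : ℕ → E2 × ℝ) : Prop :=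
  (∀ k < n, 0 < (f k).2) ∧ (∀ k < n, (f k).2 ≤ R / 4 * (1 / 2) ^ k) ∧
  (∀ k < n, closedBall (f k).1 (f k).2 ⊆ ball c R) ∧
  (∀ j < n, ∀ k, k < n → j ≠ k →
    Disjoint (closedBall (f j).1 (f j).2) (closedBall (f k).1 (f k).2)) ∧
  (∀ k < n, (f k).1 ∈ ball (d k.unpair.1) (1 / (k.unpair.2 + 1)) ∨
    ball (d k.unpair.1) (1 / (k.unpair.2 + 1)) ∩ ball c R ⊆
      ⋃ j ∈ Finset.range k, closedBall (f j).1 (f j).2)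

lemma good_congr {c : E2} {R : ℝ} {d : ℕ → E2} {n : ℕ} {f g : ℕ → E2 × ℝ}
    (hfg : ∀ k < n, f k = g k) (h : Good c R d n f) : Good c R d n g := by
  obtain ⟨h1, h2, h3, h4, h5⟩ := h
  refine ⟨fun k hk => ?_, fun k hk => ?_, fun k hk => ?_,
    fun j hj k hk hjk => ?_, fun k hk => ?_⟩
  · rw [← hfg k hk]; exact h1 k hk
  · rw [← hfg k hk]; exact h2 k hk
  · rw [← hfg k hk]; exact h3 k hk
  · rw [← hfg j hj, ← hfg k hk]; exact h4 j hj k hk hjk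
  · have he : (⋃ j ∈ Finset.range k, closedBall (f j).1 (f j).2) =
        ⋃ j ∈ Finset.range k, closedBall (g j).1 (g j).2 := by
      apply Set.iUnion₂_congr
      intro j hj
      rw [hfg j (lt_trans (Finset.mem_range.1 hj) hk)]
    rw [← hfg k hk, ← he]
    exact h5 k hk

lemma good_zero (c : E2) (R : ℝ) (d : ℕ → E2) (f : ℕ → E2 × ℝ) : Good c R d 0 f :=
  ⟨fun k hk => absurd hk (Nat.not_lt_zero k), fun k hk => absurd hk (Nat.not_lt_zero k),
    fun k hk => absurd hk (Nat.not_lt_zero k), fun j hj => absurd hj (Nat.not_lt_zero j),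
    fun k hk => absurd hk (Nat.not_lt_zero k)⟩

lemma good_extend (c : E2) (R : ℝ) (d : ℕ → E2) (hR : 0 < R) (n : ℕ) (f : ℕ → E2 × ℝ)
    (h : Good c R d n f) : ∃ v : E2 × ℝ, Good c R d (n + 1) (Function.update f n v) := by
  obtain ⟨h1, h2, h3, h4, h5⟩ := h
  obtain ⟨q, ρ, g1, g2, g3, g4, g5⟩ := extend_exists c R hR n (fun k => (f k).1)
    (fun k => (f k).2) h1 h2 (d n.unpair.1) (1 / (n.unpair.2 + 1))
  refine ⟨(q, ρ), ?_, ?_, ?_, ?_, ?_⟩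
  · intro k hk
    rcases Nat.lt_succ_iff_lt_or_eq.1 hk with hk' | rfl
    · rw [Function.update_of_ne (by omega)]; exact h1 k hk'
    · rw [Function.update_self]; exact g1
  · intro k hk
    rcases Nat.lt_succ_iff_lt_or_eq.1 hk with hk' | rfl
    · rw [Function.update_of_ne (by omega)]; exact h2 k hk'
    · rw [Function.update_self]; exact g2
  · intro k hk
    rcases Nat.lt_succ_iff_lt_or_eq.1 hk with hk' | rfl
    · rw [Function.update_of_ne (by omega)]; exact h3 k hk'
    · rw [Function.update_self]; exact g3
  · intro j hj k hk hjk
    rcases Nat.lt_succ_iff_lt_or_eq.1 hj with hj' | rfl <;>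
      rcases Nat.lt_succ_iff_lt_or_eq.1 hk with hk' | rfl
    · rw [Function.update_of_ne (by omega : j ≠ n), Function.update_of_ne (by omega : k ≠ n)]
      exact h4 j hj' k hk' hjk
    · rw [Function.update_of_ne (by omega : j ≠ k), Function.update_self]
      exact (g4 j hj').symm
    · rw [Function.update_of_ne (by omega : k ≠ j), Function.update_self]
      exact g4 k hk'
    · exact absurd rfl hjk
  · intro k hk
    rcases Nat.lt_succ_iff_lt_or_eq.1 hk with hk' | rfl
    · have he : (⋃ j ∈ Finset.range k, closedBall (f j).1 (f j).2) =
          ⋃ j ∈ Finset.range k, closedBall ((Function.update f n (q, ρ)) j).1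
            ((Function.update f n (q, ρ)) j).2 := by
        apply Set.iUnion₂_congr
        intro j hj
        rw [Function.update_of_ne (by have := Finset.mem_range.1 hj; omega)]
      rw [Function.update_of_ne (by omega : k ≠ n), ← he]
      exact h5 k hk'
    · have he : (⋃ j ∈ Finset.range k, closedBall (f j).1 (f j).2) =
          ⋃ j ∈ Finset.range k, closedBall ((Function.update f k (q, ρ)) j).1
            ((Function.update f k (q, ρ)) j).2 := by
        apply Set.iUnion₂_congr
        intro j hj
        rw [Function.update_of_ne (by have := Finset.mem_range.1 hj; omega)]
      rw [Function.update_self, ← he]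
      exact g5

def chain (c : E2) (R : ℝ) (d : ℕ → E2) (hR : 0 < R) :
    (n : ℕ) → {f : ℕ → E2 × ℝ // Good c R d n f}
  | 0 => ⟨fun _ => (c, 1), good_zero c R d _⟩
  | n + 1 =>
    ⟨Function.update (chain c R d hR n).1 n
        (Classical.choose (good_extend c R d hR n _ (chain c R d hR n).2)),
      Classical.choose_spec (good_extend c R d hR n _ (chain c R d hR n).2)⟩

def sol (c : E2) (R : ℝ) (d : ℕ → E2) (hR : 0 < R) (n : ℕ) : E2 × ℝ :=
  (chain c R d hR (n + 1)).1 n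

lemma chain_eq_sol (c : E2) (R : ℝ) (d : ℕ → E2) (hR : 0 < R) :
    ∀ n k, k < n → (chain c R d hR n).1 k = sol c R d hR k := by
  intro n
  induction n with
  | zero => intro k hk; omega
  | succ n ih =>
    intro k hk
    rcases Nat.lt_succ_iff_lt_or_eq.1 hk with hk' | rfl
    · have : (chain c R d hR (n + 1)).1 k = (chain c R d hR n).1 k := by
        show Function.update (chain c R d hR n).1 n _ k = _
        exact Function.update_of_ne (by omega) _ _
      rw [this, ih k hk']
    · rfl

lemma good_sol (c : E2) (R : ℝ) (d : ℕ → E2) (hR : 0 < R) (n : ℕ) :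
    Good c R d n (sol c R d hR) :=
  good_congr (fun k hk => chain_eq_sol c R d hR n k hk) (chain c R d hR n).2

end Stmt10Aux

/-- For every open disc `B ⊆ ℝ²` of radius `R > 0` there is a sequence of pairwise disjoint open
discs contained in `B` whose union `U` is dense in `B` and satisfies `|U| < |B|/2`; consequently
`B \ U` is a Borel set of positive Lebesgue measure. -/
theorem stmt10 (c : E2) (R : ℝ) (hR : 0 < R) :
    ∃ (x : ℕ → E2) (r : ℕ → ℝ),
      (∀ i, 0 < r i) ∧
      (Pairwise fun i j => Disjoint (Metric.ball (x i) (r i)) (Metric.ball (x j) (r j))) ∧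
      (∀ i, Metric.ball (x i) (r i) ⊆ Metric.ball c R) ∧
      Metric.ball c R ⊆ closure (⋃ i, Metric.ball (x i) (r i)) ∧
      volume (⋃ i, Metric.ball (x i) (r i)) < volume (Metric.ball c R) / 2 ∧
      MeasurableSet (Metric.ball c R \ ⋃ i, Metric.ball (x i) (r i)) ∧
      0 < volume (Metric.ball c R \ ⋃ i, Metric.ball (x i) (r i)) := by
  classical
  set d : ℕ → E2 := TopologicalSpace.denseSeq E2 with hd
  have hdense : DenseRange d := TopologicalSpace.denseRange_denseSeq E2
  set f : ℕ → E2 × ℝ := Stmt10Aux.sol c R d hR with hf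
  have G : ∀ n, Stmt10Aux.Good c R d n f := fun n => Stmt10Aux.good_sol c R d hR n
  have hpos : ∀ i, 0 < (f i).2 := fun i => (G (i + 1)).1 i (Nat.lt_succ_self i)
  have hbnd : ∀ i, (f i).2 ≤ R / 4 * (1 / 2) ^ i := fun i =>
    (G (i + 1)).2.1 i (Nat.lt_succ_self i)
  have hsub : ∀ i, closedBall (f i).1 (f i).2 ⊆ ball c R := fun i =>
    (G (i + 1)).2.2.1 i (Nat.lt_succ_self i)
  have hdisj : ∀ i j, i ≠ j →
      Disjoint (closedBall (f i).1 (f i).2) (closedBall (f j).1 (f j).2) := by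
    intro i j hij
    exact (G (max i j + 1)).2.2.2.1 i (by omega) j (by omega) hij
  have hv0 : volume (ball (0 : E2) 1) ≠ 0 := (measure_ball_pos _ _ one_pos).ne'
  have hvt : volume (ball (0 : E2) 1) ≠ ⊤ := measure_ball_lt_top.ne
  have hUvol : volume (⋃ i, ball (f i).1 (f i).2) < volume (ball c R) / 2 := by
    calc volume (⋃ i, ball (f i).1 (f i).2)
        ≤ ENNReal.ofReal (R ^ 2 / 8) * volume (ball (0 : E2) 1) :=
          Stmt10Aux.tsum_union_bound R hR _ _ (fun k => (hpos k).le) hbnd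
      _ < ENNReal.ofReal (R ^ 2 / 2) * volume (ball (0 : E2) 1) := by
          rw [ENNReal.mul_lt_mul_iff_left hv0 hvt,
            ENNReal.ofReal_lt_ofReal_iff (by positivity)]
          nlinarith [mul_pos hR hR]
      _ = volume (ball c R) / 2 := by
          rw [Stmt10Aux.vol_ball c hR.le, div_eq_mul_inv, div_eq_mul_inv, mul_right_comm,
            ENNReal.ofReal_mul (by positivity),
            ENNReal.ofReal_inv_of_pos (by norm_num : (0:ℝ) < 2), ENNReal.ofReal_ofNat]
  refine ⟨fun n => (f n).1, fun n => (f n).2, hpos, ?_, ?_, ?_, hUvol, ?_, ?_⟩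
  · intro i j hij
    exact (hdisj i j hij).mono ball_subset_closedBall ball_subset_closedBall
  · intro i
    exact ball_subset_closedBall.trans (hsub i)
  · -- density
    intro p hp
    by_cases hpc : ∃ j, p ∈ closedBall (f j).1 (f j).2
    · obtain ⟨j, hj⟩ := hpc
      have : p ∈ closure (ball (f j).1 (f j).2) := by
        rw [closure_ball _ (ne_of_gt (hpos j))]; exact hj
      exact closure_mono (subset_iUnion (fun i => ball (f i).1 (f i).2) j) this
    · rw [Metric.mem_closure_iff]
      intro ε hε
      obtain ⟨k, hk⟩ := exists_nat_one_div_lt (show (0 : ℝ) < ε / 2 by linarith)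
      have hk1 : (0 : ℝ) < 1 / (k + 1) := by positivity
      obtain ⟨m, hm⟩ := hdense.exists_dist_lt p
        (show (0 : ℝ) < 1 / (2 * (k + 1)) by positivity)
      have h5 := (G (Nat.pair m k + 1)).2.2.2.2 (Nat.pair m k) (Nat.lt_succ_self _)
      simp only [Nat.unpair_pair] at h5
      have hhalf : (1 : ℝ) / (2 * (k + 1)) ≤ 1 / (k + 1) := by
        apply one_div_le_one_div_of_le (by positivity)
        nlinarith [Nat.cast_nonneg (α := ℝ) k]
      rcases h5 with h5 | h5
      · refine ⟨(f (Nat.pair m k)).1,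
          Set.mem_iUnion.2 ⟨Nat.pair m k, mem_ball_self (hpos _)⟩, ?_⟩
        have hd1 : dist (f (Nat.pair m k)).1 (d m) < 1 / (k + 1) := mem_ball.1 h5
        calc dist p (f (Nat.pair m k)).1
            ≤ dist p (d m) + dist (d m) (f (Nat.pair m k)).1 := dist_triangle _ _ _
          _ = dist p (d m) + dist (f (Nat.pair m k)).1 (d m) := by rw [dist_comm (d m)]
          _ < ε := by linarith
      · exfalso
        apply hpc
        have hpmem : p ∈ ball (d m) (1 / (k + 1)) ∩ ball c R := by
          refine ⟨mem_ball.2 ?_, hp⟩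
          calc dist p (d m) < 1 / (2 * (k + 1)) := hm
            _ ≤ 1 / (k + 1) := hhalf
        obtain ⟨j, _, hj⟩ := Set.mem_iUnion₂.1 (h5 hpmem)
        exact ⟨j, hj⟩
  · exact measurableSet_ball.diff (MeasurableSet.iUnion fun i => measurableSet_ball)
  · -- positivity of the residual set
    rw [pos_iff_ne_zero]
    intro h0
    have hB0 : volume (ball c R) ≠ 0 := (measure_ball_pos _ _ hR).ne'
    have hBt : volume (ball c R) ≠ ⊤ := measure_ball_lt_top.ne
    have h1 : volume (ball c R) ≤
        volume (ball c R \ ⋃ i, ball (f i).1 (f i).2) +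
          volume (⋃ i, ball (f i).1 (f i).2) :=
      le_trans (measure_mono (Set.subset_diff_union _ _)) (measure_union_le _ _)
    rw [h0, zero_add] at h1
    exact absurd (lt_of_le_of_lt h1 (lt_trans hUvol (ENNReal.half_lt_self hB0 hBt)))
      (lt_irrefl _)
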